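/- The map D_θ Q(u,θ)ᵀ given componentwise by P̃ = (1/2)(w_{1:n}xᵀ + x w_{1:n}ᵀ) − (w_N/τ)xxᵀ, Ã = y w_{1:n}ᵀ − w_{n+1:n+m} xᵀ, q̃ = τ w_{1:n} − w_N x, b̃ = τ w_{n+1:n+m} − w_N y is the adjoint of the linear map (P̃, Ã, q̃, b̃) ↦ (P̃x + Ãᵀy + τq̃, −Ãx + τb̃, −(1/τ)xᵀP̃x − q̃ᵀx − b̃ᵀy), with respect to the inner products ⟨(P₁,A₁,q₁,b₁),(P₂,A₂,q₂,b₂)⟩ = tr(P₁P₂) + tr(A₁ᵀA₂) + q₁ᵀq₂ + b₁ᵀb₂ on the parameter space (with P̃ restricted to symmetric matrices) and the standard inner product on ℝᴺ. -/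

import Mathlib

open Matrix

lemma trace_mul_vecMulVec {k l : ℕ} (M : Matrix (Fin k) (Fin l) ℝ) (a : Fin l → ℝ)
    (b : Fin k → ℝ) : (M * vecMulVec a b).trace = b ⬝ᵥ (M *ᵥ a) := by
  simp [Matrix.trace, Matrix.mul_apply, vecMulVec_apply, dotProduct, mulVec,
    Finset.mul_sum, mul_comm, mul_left_comm]

/-- The map `(P̃,Ã,q̃,b̃) ↦ (P̃x + Ãᵀy + τq̃, −Ãx + τb̃, −(1/τ)xᵀP̃x − q̃ᵀx − b̃ᵀy)` has
adjoint `w ↦ (P̂, Â, q̂, b̂)` with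
`P̂ = (1/2)(w₁xᵀ + xw₁ᵀ) − (w_N/τ)xxᵀ`, `Â = yw₁ᵀ − w₂xᵀ`, `q̂ = τw₁ − w_N x`,
`b̂ = τw₂ − w_N y`, with respect to the inner products
`⟨(P₁,A₁,q₁,b₁),(P₂,A₂,q₂,b₂)⟩ = tr(P₁P₂) + tr(A₁ᵀA₂) + q₁ᵀq₂ + b₁ᵀb₂`
(with `P̃` symmetric) and the standard inner product on `ℝᴺ` (`N = n+m+1`, blocks
`w₁, w₂, w_N`). -/
theorem DthetaQ_adjoint (n m : ℕ)
    (x : Fin n → ℝ) (y : Fin m → ℝ) (τ : ℝ) (hτ : τ ≠ 0)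
    (Pt : Matrix (Fin n) (Fin n) ℝ) (hPt : Pt.IsSymm)
    (At : Matrix (Fin m) (Fin n) ℝ) (qt : Fin n → ℝ) (bt : Fin m → ℝ)
    (w₁ : Fin n → ℝ) (w₂ : Fin m → ℝ) (wN : ℝ) :
    (Pt *ᵥ x + Atᵀ *ᵥ y + τ • qt) ⬝ᵥ w₁
      + (-(At *ᵥ x) + τ • bt) ⬝ᵥ w₂
      + (-(1/τ) * (x ⬝ᵥ (Pt *ᵥ x)) - qt ⬝ᵥ x - bt ⬝ᵥ y) * wN
    = (Pt * ((1/2 : ℝ) • (vecMulVec w₁ x + vecMulVec x w₁) - (wN / τ) • vecMulVec x x)).trace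
      + (Atᵀ * (vecMulVec y w₁ - vecMulVec w₂ x)).trace
      + qt ⬝ᵥ (τ • w₁ - wN • x)
      + bt ⬝ᵥ (τ • w₂ - wN • y) := by
  have hsym : x ⬝ᵥ (Pt *ᵥ w₁) = w₁ ⬝ᵥ (Pt *ᵥ x) := by
    rw [dotProduct_mulVec, ← mulVec_transpose, hPt, dotProduct_comm]
  have h1 : (Atᵀ *ᵥ y) ⬝ᵥ w₁ = w₁ ⬝ᵥ (Atᵀ *ᵥ y) := dotProduct_comm _ _
  have h2 : (At *ᵥ x) ⬝ᵥ w₂ = x ⬝ᵥ (Atᵀ *ᵥ w₂) := by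
    rw [dotProduct_mulVec, vecMul_transpose]
  simp only [Matrix.mul_sub, Matrix.mul_add, Matrix.mul_smul, trace_sub, trace_add, trace_smul,
    trace_mul_vecMulVec, smul_eq_mul, dotProduct_sub, dotProduct_smul, dotProduct_add,
    add_dotProduct, neg_dotProduct, smul_dotProduct]
  have c : (Pt *ᵥ x) ⬝ᵥ w₁ = w₁ ⬝ᵥ (Pt *ᵥ x) := dotProduct_comm _ _
  field_simp
  linear_combination 2*τ*c - τ*hsym + 2*τ*h1 - 2*τ*h2
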